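/- Let G = (V, E) be a finite undirected graph that admits a strongly connected orientation. Then there exists a strongly connected orientation of G whose maximum indegree equals max over nonempty U ⊆ V of ⌈(m(U) + c(U)) / |U|⌉; consequently the minimum, over all strongly connected orientations of G, of the maximum indegree equals this quantity. -/

import Mathlib

/-- An orientation of an undirected simple graph `G`: each edge is assigned
exactly one direction, giving the arc relation `arc`. -/
structure GraphOrientation {V : Type*} (G : SimpleGraph V) where
  arc : V → V → Prop
  adj_iff : ∀ u v, G.Adj u v ↔ (arc u v ∨ arc v u)
  asymm : ∀ u v, arc u v → ¬ arc v u

/-- The indegree of a vertex in an orientation. -/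
noncomputable def indeg {V : Type*} {G : SimpleGraph V} (D : GraphOrientation G) (v : V) : ℕ :=
  {u | D.arc u v}.ncard

open Relation

section RTG
variable {α : Type*}

/-- If there is an `R`-walk from `x` to `y`, there is one avoiding the pair `f`,
or one avoiding `f` starting from `f.2`. -/
lemma rtg_split (R : α → α → Prop) (f : α × α) {x y : α}
    (h : ReflTransGen R x y) :
    ReflTransGen (fun s t => R s t ∧ (s, t) ≠ f) x y ∨
      ReflTransGen (fun s t => R s t ∧ (s, t) ≠ f) f.2 y := by
  induction h using ReflTransGen.head_induction_on with
  | refl => exact Or.inl ReflTransGen.refl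
  | head hab _ ih =>
    rename_i a b _
    rcases ih with ih | ih
    · by_cases hf : (a, b) = f
      · right
        have : b = f.2 := by rw [← hf]
        rwa [← this]
      · exact Or.inl (ReflTransGen.head ⟨hab, hf⟩ ih)
    · exact Or.inr ih

/-- First use of one of two pairs. -/
lemma rtg_split2 (R : α → α → Prop) (f g : α × α) {x y : α}
    (h : ReflTransGen R x y) :
    ReflTransGen (fun s t => R s t ∧ (s, t) ≠ f ∧ (s, t) ≠ g) x y ∨
      ReflTransGen (fun s t => R s t ∧ (s, t) ≠ f ∧ (s, t) ≠ g) x f.1 ∨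
      ReflTransGen (fun s t => R s t ∧ (s, t) ≠ f ∧ (s, t) ≠ g) x g.1 := by
  induction h using ReflTransGen.head_induction_on with
  | refl => exact Or.inl ReflTransGen.refl
  | head hab _ ih =>
    rename_i a b _
    by_cases hf : (a, b) = f
    · have : a = f.1 := by rw [← hf]
      exact Or.inr (Or.inl (this ▸ ReflTransGen.refl))
    · by_cases hg : (a, b) = g
      · have : a = g.1 := by rw [← hg]
        exact Or.inr (Or.inr (this ▸ ReflTransGen.refl))
      · rcases ih with ih | ih | ih
        · exact Or.inl (ReflTransGen.head ⟨hab, hf, hg⟩ ih)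
        · exact Or.inr (Or.inl (ReflTransGen.head ⟨hab, hf, hg⟩ ih))
        · exact Or.inr (Or.inr (ReflTransGen.head ⟨hab, hf, hg⟩ ih))

/-- Crossing a set boundary: if `x ∉ S` but `y ∈ S`, some step enters `S`,
reachable from `x` inside the complement. -/
lemma rtg_first_entry (R : α → α → Prop) (S : Set α) {x y : α}
    (h : ReflTransGen R x y) (hx : x ∉ S) (hy : y ∈ S) :
    ∃ a b, R a b ∧ a ∉ S ∧ b ∈ S ∧
      ReflTransGen (fun s t => R s t ∧ s ∉ S ∧ t ∉ S) x a := by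
  revert hx
  induction h using ReflTransGen.head_induction_on with
  | refl => exact fun hx => absurd hy hx
  | head hab h ih =>
    rename_i a c
    intro hx
    by_cases hc : c ∈ S
    · exact ⟨a, c, hab, hx, hc, ReflTransGen.refl⟩
    · obtain ⟨a', b', h1, h2, h3, h4⟩ := ih hc
      exact ⟨a', b', h1, h2, h3, ReflTransGen.head ⟨hab, hx, hc⟩ h4⟩

/-- There is a step leaving `S` if `x ∈ S` reaches `y ∉ S`. -/
lemma rtg_exit (R : α → α → Prop) (S : Set α) {x y : α}
    (h : ReflTransGen R x y) (hx : x ∈ S) (hy : y ∉ S) :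
    ∃ a b, R a b ∧ a ∈ S ∧ b ∉ S := by
  obtain ⟨a, b, h1, h2, h3, _⟩ := rtg_first_entry R Sᶜ h (by simpa using hx) hy
  exact ⟨a, b, h1, by simpa using h2, h3⟩


end RTG


section RTG2
variable {α : Type*}
lemma rtg_exists_path {R : α → α → Prop} {u v : α} (h : ReflTransGen R u v) :
    ∃ p : List α, p ≠ [] ∧ p.Nodup ∧ p.Chain' R ∧ p.head? = some u ∧ p.getLast? = some v := by
  induction h using ReflTransGen.head_induction_on with
  | refl => exact ⟨[v], by simp, by simp, List.isChain_singleton _, by simp, by simp⟩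
  | head hab h ih =>
    rename_i a c
    obtain ⟨p, hne, hnd, hch, hhd, hlast⟩ := ih
    by_cases hap : a ∈ p
    · obtain ⟨s, t, rfl⟩ := List.append_of_mem hap
      refine ⟨a :: t, by simp, ?_, ?_, by simp, ?_⟩
      · exact (List.Nodup.sublist (List.sublist_append_right s (a :: t)) hnd)
      · have := List.IsChain.suffix hch ⟨s, rfl⟩
        exact this
      · rcases t.eq_nil_or_concat with rfl | ⟨t', x, rfl⟩
        · -- a is the last element, so a = v
          have : (s ++ [a]).getLast? = some v := by simpa using hlast
          rw [List.getLast?_append_of_ne_nil] at this <;> simp_all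
        · rw [List.getLast?_append_of_ne_nil] at hlast <;> simp_all
    · refine ⟨a :: p, by simp, by simp [hnd, hap], ?_, by simp, ?_⟩
      · apply List.isChain_cons.mpr
        refine ⟨fun y hy => ?_, hch⟩
        rw [hhd] at hy
        simp only [Option.mem_def, Option.some.injEq] at hy
        exact hy ▸ hab
      · have : a :: p = [a] ++ p := rfl
        rw [this, List.getLast?_append_of_ne_nil [a] hne]
        exact hlast

end RTG2

lemma rtg_closed {α : Type*} {R : α → α → Prop} {S : Set α}
    (hcl : ∀ a b, R a b → a ∈ S → b ∈ S) {x y : α}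
    (h : ReflTransGen R x y) (hx : x ∈ S) : y ∈ S := by
  induction h with
  | refl => exact hx
  | tail _ hab ih => exact hcl _ _ hab ih

section Rev
variable {V : Type*} {G : SimpleGraph V}


def Strong (D : GraphOrientation G) : Prop := ∀ u v : V, ReflTransGen D.arc u v

lemma no_arc_self (D : GraphOrientation G) (a : V) : ¬ D.arc a a := by
  intro h
  have := (D.adj_iff a a).mpr (Or.inl h)
  exact G.irrefl this

/-- Reversal of a set of arcs of an orientation is again an orientation. -/
def revO (D : GraphOrientation G) (S : Set (V × V)) (hS : ∀ p ∈ S, D.arc p.1 p.2) :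
    GraphOrientation G where
  arc u v := (D.arc u v ∧ (u, v) ∉ S) ∨ (v, u) ∈ S
  adj_iff u v := by
    constructor
    · intro h
      rcases (D.adj_iff u v).mp h with h' | h'
      · by_cases hm : (u, v) ∈ S
        · exact Or.inr (Or.inr hm)
        · exact Or.inl (Or.inl ⟨h', hm⟩)
      · by_cases hm : (v, u) ∈ S
        · exact Or.inl (Or.inr hm)
        · exact Or.inr (Or.inl ⟨h', hm⟩)
    · intro h
      rcases h with (⟨h', _⟩ | h') | (⟨h', _⟩ | h')
      · exact (D.adj_iff u v).mpr (Or.inl h')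
      · exact (D.adj_iff u v).mpr (Or.inr (hS _ h'))
      · exact (D.adj_iff u v).mpr (Or.inr h')
      · exact (D.adj_iff u v).mpr (Or.inl (hS _ h'))
  asymm u v := by
    rintro (⟨h1, h2⟩ | h1) (⟨h3, h4⟩ | h3)
    · exact D.asymm _ _ h1 h3
    · exact h2 h3
    · exact h4 h1
    · exact D.asymm _ _ (hS _ h1) (hS _ h3)

lemma revO_arc (D : GraphOrientation G) (S : Set (V × V)) (hS) (u v : V) :
    (revO D S hS).arc u v ↔ ((D.arc u v ∧ (u, v) ∉ S) ∨ (v, u) ∈ S) := Iff.rfl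

/-- The arc set of a path given as a list. -/
def listArcs' (p : List V) : Set (V × V) :=
  {q | ∃ (i : ℕ) (h : i + 1 < p.length),
    p.get ⟨i, by omega⟩ = q.1 ∧ p.get ⟨i + 1, h⟩ = q.2}

lemma listArcs'_sub {p : List V} {R : V → V → Prop} (hch : p.Chain' R) :
    ∀ q ∈ listArcs' p, R q.1 q.2 := by
  rintro q ⟨i, h, h1, h2⟩
  have : R (p.get ⟨i, by omega⟩) (p.get ⟨i + 1, h⟩) := List.isChain_iff_getElem.mp hch i (by omega)
  rw [h1, h2] at this
  exact this

end Rev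

lemma get_congr {V : Type*} (p : List V) {a b : ℕ} (ha : a < p.length) (hab : a = b) :
    p.get ⟨a, ha⟩ = p.get ⟨b, hab ▸ ha⟩ := by subst hab; rfl

section PathRev
variable {V : Type*} [Fintype V] {G : SimpleGraph V} {D : GraphOrientation G} {p : List V}
  {u v₀ : V}
set_option linter.unusedSectionVars false

lemma get_head (hne : p ≠ []) (hhd : p.head? = some u) :
    p.get ⟨0, by cases p <;> simp_all⟩ = u := by
  cases p with
  | nil => simp at hhd
  | cons a t => simp at hhd; simp [hhd]

lemma get_last (hne : p ≠ []) (hlast : p.getLast? = some v₀) :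
    p.get ⟨p.length - 1, by cases p <;> simp_all⟩ = v₀ := by
  have h1 : p.getLast hne = v₀ := by
    rw [List.getLast?_eq_getLast hne] at hlast
    simpa using hlast
  rw [List.getLast_eq_getElem] at h1
  exact h1

lemma two_le_length (hne : p ≠ []) (hhd : p.head? = some u) (hlast : p.getLast? = some v₀)
    (huv : u ≠ v₀) : 2 ≤ p.length := by
  by_contra h
  push_neg at h
  interval_cases hL : p.length
  · simp_all
  · obtain ⟨a, rfl⟩ := List.length_eq_one_iff.mp hL
    simp at hhd hlast
    exact huv (hhd.symm.trans hlast)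

lemma mem_arcs_snd (hnd : p.Nodup) {y : V} {j : ℕ} (hj : j < p.length) :
    ((y, p.get ⟨j, hj⟩) ∈ listArcs' p) ↔ ∃ _ : 1 ≤ j, y = p.get ⟨j - 1, by omega⟩ := by
  constructor
  · rintro ⟨i, h, h1, h2⟩
    simp only at h1 h2
    have hthis : (⟨i + 1, h⟩ : Fin p.length) = ⟨j, hj⟩ :=
      (hnd.get_inj_iff (i := ⟨i+1, h⟩) (j := ⟨j, hj⟩)).mp h2
    have hij : i + 1 = j := congrArg Fin.val hthis
    refine ⟨by omega, ?_⟩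
    rw [← h1]
    congr 1
    exact Fin.ext (by simp; omega)
  · rintro ⟨h1, rfl⟩
    exact ⟨j - 1, by omega, by congr 1, by congr 1; exact Fin.ext (by simp; omega)⟩

lemma mem_arcs_fst (hnd : p.Nodup) {y : V} {j : ℕ} (hj : j < p.length) :
    ((p.get ⟨j, hj⟩, y) ∈ listArcs' p) ↔ ∃ h : j + 1 < p.length, y = p.get ⟨j + 1, h⟩ := by
  constructor
  · rintro ⟨i, h, h1, h2⟩
    simp only at h1 h2
    have hij : i = j := by
      have := (hnd.get_inj_iff (i := ⟨i, by omega⟩) (j := ⟨j, hj⟩)).mp h1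
      exact congrArg Fin.val this
    subst hij
    exact ⟨h, h2.symm⟩
  · rintro ⟨h, rfl⟩
    exact ⟨j, h, rfl, rfl⟩

lemma arcs_mem_ends {q : V × V} (hq : q ∈ listArcs' p) : q.1 ∈ p ∧ q.2 ∈ p := by
  obtain ⟨i, h, h1, h2⟩ := hq
  exact ⟨h1 ▸ List.get_mem p _, h2 ▸ List.get_mem p _⟩

lemma arc_get (hch : p.Chain' D.arc) {i : ℕ} (h : i + 1 < p.length) :
    D.arc (p.get ⟨i, by omega⟩) (p.get ⟨i + 1, h⟩) :=
  List.isChain_iff_getElem.mp hch i (by omega)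

lemma indeg_revO_not_mem (hsub : ∀ q ∈ listArcs' p, D.arc q.1 q.2) {z : V} (hz : z ∉ p) :
    indeg (revO D (listArcs' p) hsub) z = indeg D z := by
  unfold indeg
  congr 1
  ext y
  simp only [Set.mem_setOf_eq, revO_arc]
  constructor
  · rintro (⟨h1, _⟩ | h1)
    · exact h1
    · exact absurd (arcs_mem_ends h1).1 (by simpa using hz)
  · intro h1
    refine Or.inl ⟨h1, fun hm => ?_⟩
    exact hz (arcs_mem_ends hm).2

lemma indeg_revO_mid (hnd : p.Nodup) (hch : p.Chain' D.arc)
    (hsub : ∀ q ∈ listArcs' p, D.arc q.1 q.2) {j : ℕ} (hj0 : 0 < j) (hj1 : j + 1 < p.length) :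
    indeg (revO D (listArcs' p) hsub) (p.get ⟨j, by omega⟩) =
      indeg D (p.get ⟨j, by omega⟩) := by
  have harc_prv : D.arc (p.get ⟨j - 1, by omega⟩) (p.get ⟨j, by omega⟩) := by
    have h := arc_get hch (i := j - 1) (p := p) (by omega)
    convert h using 2
    exact Fin.ext (by simp; omega)
  have harc_z : D.arc (p.get ⟨j, by omega⟩) (p.get ⟨j + 1, hj1⟩) := arc_get hch hj1
  have hset : {y | (revO D (listArcs' p) hsub).arc y (p.get ⟨j, by omega⟩)} =
      insert (p.get ⟨j + 1, hj1⟩)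
        ({y | D.arc y (p.get ⟨j, by omega⟩)} \ {p.get ⟨j - 1, by omega⟩}) := by
    ext y
    simp only [Set.mem_setOf_eq, revO_arc, Set.mem_insert_iff, Set.mem_diff,
      Set.mem_singleton_iff]
    constructor
    · rintro (⟨h1, h2⟩ | h1)
      · refine Or.inr ⟨h1, fun hy => h2 ?_⟩
        subst hy
        exact ⟨j - 1, by omega, rfl, by congr 1; exact Fin.ext (by simp; omega)⟩
      · obtain ⟨h, hy⟩ := (mem_arcs_fst hnd (by omega)).mp h1
        exact Or.inl hy
    · rintro (rfl | ⟨h1, h2⟩)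
      · exact Or.inr ⟨j, hj1, rfl, rfl⟩
      · refine Or.inl ⟨h1, fun hm => ?_⟩
        obtain ⟨h1', hy⟩ := (mem_arcs_snd hnd (by omega)).mp hm
        exact h2 hy
  unfold indeg
  rw [hset]
  have h1 : p.get ⟨j + 1, hj1⟩ ∉
      ({y | D.arc y (p.get ⟨j, by omega⟩)} \ {p.get ⟨j - 1, by omega⟩}) := by
    rintro ⟨h2, _⟩
    exact D.asymm _ _ harc_z h2
  rw [Set.ncard_insert_of_notMem h1]
  exact Set.ncard_diff_singleton_add_one
    (show p.get ⟨j - 1, by omega⟩ ∈ {y | D.arc y (p.get ⟨j, by omega⟩)} from harc_prv)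

lemma indeg_revO_head (hne : p ≠ []) (hnd : p.Nodup) (hch : p.Chain' D.arc)
    (hhd : p.head? = some u) (hlast : p.getLast? = some v₀) (huv : u ≠ v₀)
    (hsub : ∀ q ∈ listArcs' p, D.arc q.1 q.2) :
    indeg (revO D (listArcs' p) hsub) u = indeg D u + 1 := by
  have hL := two_le_length hne hhd hlast huv
  have h0 : p.get ⟨0, by omega⟩ = u := get_head hne hhd
  have harc : D.arc (p.get ⟨0, by omega⟩) (p.get ⟨1, by omega⟩) :=
    arc_get hch (i := 0) (by omega)
  have hset : {y | (revO D (listArcs' p) hsub).arc y u} =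
      insert (p.get ⟨1, by omega⟩) {y | D.arc y u} := by
    ext y
    simp only [Set.mem_setOf_eq, revO_arc, Set.mem_insert_iff]
    rw [← h0]
    constructor
    · rintro (⟨h1, _⟩ | h1)
      · exact Or.inr h1
      · obtain ⟨h, hy⟩ := (mem_arcs_fst hnd (by omega)).mp h1
        exact Or.inl hy
    · rintro (rfl | h1)
      · exact Or.inr ⟨0, by omega, rfl, rfl⟩
      · refine Or.inl ⟨h1, fun hm => ?_⟩
        obtain ⟨h1', hy⟩ := (mem_arcs_snd hnd (by omega)).mp hm
        omega
  unfold indeg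
  rw [hset, Set.ncard_insert_of_notMem]
  intro h1
  rw [← h0] at h1
  exact D.asymm _ _ harc h1

lemma indeg_revO_last (hne : p ≠ []) (hnd : p.Nodup) (hch : p.Chain' D.arc)
    (hhd : p.head? = some u) (hlast : p.getLast? = some v₀) (huv : u ≠ v₀)
    (hsub : ∀ q ∈ listArcs' p, D.arc q.1 q.2) :
    indeg (revO D (listArcs' p) hsub) v₀ + 1 = indeg D v₀ := by
  have hL := two_le_length hne hhd hlast huv
  have hlg : p.get ⟨p.length - 1, by omega⟩ = v₀ := get_last hne hlast
  have harc : D.arc (p.get ⟨p.length - 2, by omega⟩) (p.get ⟨p.length - 1, by omega⟩) := by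
    have h := arc_get hch (i := p.length - 2) (p := p) (by omega)
    convert h using 2
    exact Fin.ext (by simp; omega)
  have hset : {y | (revO D (listArcs' p) hsub).arc y v₀} =
      {y | D.arc y v₀} \ {p.get ⟨p.length - 2, by omega⟩} := by
    ext y
    simp only [Set.mem_setOf_eq, revO_arc, Set.mem_diff, Set.mem_singleton_iff]
    rw [← hlg]
    constructor
    · rintro (⟨h1, h2⟩ | h1)
      · refine ⟨h1, fun hy => h2 ?_⟩
        subst hy
        refine ⟨p.length - 2, by omega, rfl, by congr 1; exact Fin.ext (by simp; omega)⟩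
      · obtain ⟨h, _⟩ := (mem_arcs_fst hnd (by omega)).mp h1
        omega
    · rintro ⟨h1, h2⟩
      refine Or.inl ⟨h1, fun hm => ?_⟩
      obtain ⟨h3, hy⟩ := (mem_arcs_snd hnd (by omega)).mp hm
      exact h2 (hy.trans (get_congr p (by omega) (by omega)))
  unfold indeg
  rw [hset]
  exact Set.ncard_diff_singleton_add_one
    (show p.get ⟨p.length - 2, by omega⟩ ∈ {y | D.arc y v₀} from (by rwa [hlg] at harc))

lemma indeg_revO_other (hne : p ≠ []) (hnd : p.Nodup) (hch : p.Chain' D.arc)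
    (hhd : p.head? = some u) (hlast : p.getLast? = some v₀) (huv : u ≠ v₀)
    (hsub : ∀ q ∈ listArcs' p, D.arc q.1 q.2) {z : V} (hzu : z ≠ u) (hzv : z ≠ v₀) :
    indeg (revO D (listArcs' p) hsub) z = indeg D z := by
  have hL := two_le_length hne hhd hlast huv
  by_cases hz : z ∈ p
  · obtain ⟨⟨j, hj⟩, rfl⟩ := List.mem_iff_get.mp hz
    have hj0 : 0 < j := by
      rcases Nat.eq_zero_or_pos j with rfl | h
      · exact absurd (get_head hne hhd) hzu
      · exact h
    have hj1 : j + 1 < p.length := by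
      rcases Nat.lt_or_ge (j + 1) p.length with h | h
      · exact h
      · exfalso
        apply hzv
        rw [← get_last hne hlast]
        congr 1
        exact Fin.ext (by simp; omega)
    exact indeg_revO_mid hnd hch hsub hj0 hj1
  · exact indeg_revO_not_mem hsub hz

lemma revO_path_strong (hne : p ≠ []) (hnd : p.Nodup) (hch : p.Chain' D.arc)
    (hhd : p.head? = some u) (hlast : p.getLast? = some v₀)
    (hsub : ∀ q ∈ listArcs' p, D.arc q.1 q.2) (hD : Strong D)
    (hrob : ∀ f : V × V, D.arc f.1 f.2 →
      ReflTransGen (fun s t => D.arc s t ∧ (s, t) ≠ f) u v₀) :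
    Strong (revO D (listArcs' p) hsub) := by
  by_contra hns
  simp only [Strong, not_forall] at hns
  obtain ⟨x, y, hxy⟩ := hns
  set Rv := (revO D (listArcs' p) hsub).arc with hRv
  set S : Set V := {z | ReflTransGen Rv x z} with hS
  have hxS : x ∈ S := ReflTransGen.refl
  have hyS : y ∉ S := hxy
  have hclrev : ∀ a b, Rv a b → a ∈ S → b ∈ S := fun a b h ha => ha.tail h
  have hAPS : ∀ i (h : i + 1 < p.length),
      p.get ⟨i + 1, h⟩ ∈ S → p.get ⟨i, by omega⟩ ∈ S := by
    intro i h hi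
    refine hclrev _ _ ?_ hi
    exact Or.inr ⟨i, h, rfl, rfl⟩
  have hmono : ∀ i (hi : i < p.length), p.get ⟨i, hi⟩ ∉ S →
      ∀ d (hd : i + d < p.length), p.get ⟨i + d, hd⟩ ∉ S := by
    intro i hi hnot d
    induction d with
    | zero => intro hd; exact hnot
    | succ d ih =>
      intro hd hmem
      exact (ih (by omega)) (hAPS (i + d) hd hmem)
  have hmono' : ∀ i j (hi : i < p.length) (hj : j < p.length), i ≤ j →
      p.get ⟨i, hi⟩ ∉ S → p.get ⟨j, hj⟩ ∉ S := by
    intro i j hi hj hij hnot hmem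
    have e : p.get ⟨j, hj⟩ = p.get ⟨i + (j - i), by omega⟩ := get_congr p hj (by omega)
    exact hmono i hi hnot (j - i) (by omega) (e ▸ hmem)
  obtain ⟨a, b, hab, haS, hbS⟩ := rtg_exit D.arc S (hD x y) hxS hyS
  have hinAP : (a, b) ∈ listArcs' p := by
    by_contra h
    exact hbS (hclrev a b (Or.inl ⟨hab, h⟩) haS)
  obtain ⟨m, hm, ha', hb'⟩ := hinAP
  simp only at ha' hb'
  have hu : u ∈ S := by
    rw [← get_head hne hhd]
    by_contra h
    exact (hmono' 0 m (by omega) (by omega) (by omega) h) (ha' ▸ haS)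
  have hv : v₀ ∉ S := by
    rw [← get_last hne hlast]
    exact hmono' (m + 1) (p.length - 1) (by omega) (by omega) (by omega) (hb' ▸ hbS)
  have huniq : ∀ a' b', D.arc a' b' → a' ∈ S → b' ∉ S → (a', b') = (a, b) := by
    intro a' b' hab' haS' hbS'
    have hinAP' : (a', b') ∈ listArcs' p := by
      by_contra h
      exact hbS' (hclrev a' b' (Or.inl ⟨hab', h⟩) haS')
    obtain ⟨i, hi, hia, hib⟩ := hinAP'
    simp only at hia hib
    have him : i = m := by
      by_contra hne'
      rcases Nat.lt_or_ge i m with h | h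
      · exact (hmono' (i + 1) m (by omega) (by omega) (by omega) (hib ▸ hbS')) (ha' ▸ haS)
      · have h2 : m < i := by omega
        exact (hmono' (m + 1) i (by omega) (by omega) (by omega) (hb' ▸ hbS)) (hia ▸ haS')
    subst him
    rw [← hia, ← hib, ← ha', ← hb']
  have harc_ab : D.arc a b := hab
  have hcl2 : ∀ s t, (D.arc s t ∧ (s, t) ≠ (a, b)) → s ∈ S → t ∈ S := by
    rintro s t ⟨h1, h2⟩ hsS
    by_contra htS
    exact h2 (huniq s t h1 hsS htS)
  exact hv (rtg_closed hcl2 (hrob (a, b) harc_ab) hu)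

end PathRev

section Pocket
variable {V : Type*} [Fintype V] {G : SimpleGraph V}

/-- Arc relation avoiding the pair `f`. -/
def Rav (D : GraphOrientation G) (f : V × V) : V → V → Prop :=
  fun s t => D.arc s t ∧ (s, t) ≠ f

/-- The pocket of an arc `f`: vertices that cannot reach `v₀` avoiding `f`. -/
def Apk (D : GraphOrientation G) (v₀ : V) (f : V × V) : Set V :=
  {z | ¬ ReflTransGen (Rav D f) z v₀}

/-- The robust set: vertices reaching `v₀` avoiding any single arc. -/
def Wrob (D : GraphOrientation G) (v₀ : V) : Set V :=
  {u | ∀ f : V × V, D.arc f.1 f.2 → ReflTransGen (Rav D f) u v₀}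

variable {D : GraphOrientation G} {v₀ : V}
set_option linter.unusedSectionVars false

lemma v0_mem_Wrob : v₀ ∈ Wrob D v₀ := fun _ _ => ReflTransGen.refl

lemma Wrob_disj_Apk {u : V} {f : V × V} (hu : u ∈ Wrob D v₀) (hf : D.arc f.1 f.2) :
    u ∉ Apk D v₀ f := fun h => h (hu f hf)

lemma Apk_closed {z y : V} {f : V × V} (hz : z ∈ Apk D v₀ f) (ha : D.arc z y)
    (hne : (z, y) ≠ f) : y ∈ Apk D v₀ f := by
  intro hy
  exact hz (ReflTransGen.head ⟨ha, hne⟩ hy)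

lemma head_not_mem_Apk {f : V × V} (hf : D.arc f.1 f.2) (hD : Strong D) :
    f.2 ∉ Apk D v₀ f := by
  rcases rtg_split D.arc f (hD f.2 v₀) with h | h <;> exact fun hc => hc h

lemma Apk_trans {z : V} {f g : V × V} (hz : z ∈ Apk D v₀ f) (hh : f.2 ∈ Apk D v₀ g) :
    z ∈ Apk D v₀ g := by
  intro hrtg
  rcases rtg_split (Rav D g) f hrtg with h | h
  · exact hz (ReflTransGen.mono (fun s t ht => ⟨ht.1.1, ht.2⟩) _ _ h)
  · exact hh (ReflTransGen.mono (fun s t ht => ht.1) _ _ h)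

open Classical in
lemma exists_pocket_head_robust (hD : Strong D) {z : V} (hz : z ∉ Wrob D v₀) :
    ∃ f : V × V, D.arc f.1 f.2 ∧ z ∈ Apk D v₀ f ∧ f.2 ∈ Wrob D v₀ := by
  have hS : (Finset.univ.filter
      (fun f : V × V => D.arc f.1 f.2 ∧ z ∈ Apk D v₀ f)).Nonempty := by
    simp only [Wrob, Set.mem_setOf_eq, not_forall] at hz
    obtain ⟨f, hf1, hf2⟩ := hz
    exact ⟨f, Finset.mem_filter.mpr ⟨Finset.mem_univ _, hf1, hf2⟩⟩
  obtain ⟨f, hfS, hmax⟩ := Finset.exists_max_image _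
    (fun f => (Finset.univ.filter (· ∈ Apk D v₀ f)).card) hS
  simp only [Finset.mem_filter, Finset.mem_univ, true_and] at hfS
  obtain ⟨hfarc, hfz⟩ := hfS
  by_cases hw : f.2 ∈ Wrob D v₀
  · exact ⟨f, hfarc, hfz, hw⟩
  · exfalso
    simp only [Wrob, Set.mem_setOf_eq, not_forall] at hw
    obtain ⟨g, hg1, hg2⟩ := hw
    have hg2' : f.2 ∈ Apk D v₀ g := hg2
    have hzg : z ∈ Apk D v₀ g := Apk_trans hfz hg2'
    have hgS : g ∈ Finset.univ.filter (fun f : V × V => D.arc f.1 f.2 ∧ z ∈ Apk D v₀ f) := by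
      simp [Finset.mem_filter, hg1, hzg]
    have hsub : (Finset.univ.filter (· ∈ Apk D v₀ f)) ⊂
        (Finset.univ.filter (· ∈ Apk D v₀ g)) := by
      constructor
      · intro w hw'
        simp only [Finset.mem_filter, Finset.mem_univ, true_and] at hw' ⊢
        exact Apk_trans hw' hg2'
      · intro hcon
        have h1 : f.2 ∈ Finset.univ.filter (· ∈ Apk D v₀ g) := by
          simp [Finset.mem_filter, hg2']
        have h2 := hcon h1
        simp only [Finset.mem_filter, Finset.mem_univ, true_and] at h2
        exact head_not_mem_Apk hfarc hD h2
    have := Finset.card_lt_card hsub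
    have := hmax g hgS
    omega

lemma pockets_disjoint (hD : Strong D) {f g : V × V} (hf : D.arc f.1 f.2)
    (hg : D.arc g.1 g.2) (hfg : f ≠ g) (hf2 : f.2 ∈ Wrob D v₀) (hg2 : g.2 ∈ Wrob D v₀)
    {z : V} (hzf : z ∈ Apk D v₀ f) (hzg : z ∈ Apk D v₀ g) : False := by
  rcases rtg_split2 D.arc f g (hD z v₀) with h | h | h
  · exact hzf (ReflTransGen.mono (fun s t ht => ⟨ht.1, ht.2.1⟩) _ _ h)
  · refine hzg ?_
    have h1 : ReflTransGen (Rav D g) z f.1 := ReflTransGen.mono (fun s t ht => ⟨ht.1, ht.2.2⟩) _ _ h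
    have h2 : Rav D g f.1 f.2 := ⟨hf, by simpa using hfg⟩
    exact (h1.tail h2).trans (hf2 g hg)
  · refine hzf ?_
    have h1 : ReflTransGen (Rav D f) z g.1 := ReflTransGen.mono (fun s t ht => ⟨ht.1, ht.2.1⟩) _ _ h
    have h2 : Rav D f g.1 g.2 := ⟨hg, by simpa using hfg.symm⟩
    exact (h1.tail h2).trans (hg2 f hf)

lemma pockets_no_edge (hD : Strong D) {f g : V × V} (hf : D.arc f.1 f.2)
    (hg : D.arc g.1 g.2) (hfg : f ≠ g) (hf2 : f.2 ∈ Wrob D v₀) (hg2 : g.2 ∈ Wrob D v₀)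
    {y y' : V} (hyf : y ∈ Apk D v₀ f) (hyg : y' ∈ Apk D v₀ g) (hadj : G.Adj y y') :
    False := by
  rcases (D.adj_iff y y').mp hadj with ha | ha
  · by_cases he : (y, y') = f
    · have : y' = f.2 := by rw [← he]
      exact Wrob_disj_Apk (this ▸ hf2) hg hyg
    · exact pockets_disjoint hD hf hg hfg hf2 hg2 (Apk_closed hyf ha he) hyg
  · by_cases he : (y', y) = g
    · have : y = g.2 := by rw [← he]
      exact Wrob_disj_Apk (this ▸ hg2) hf hyf
    · exact pockets_disjoint hD hf hg hfg hf2 hg2 hyf (Apk_closed hyg ha he)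

/-- Uniqueness of the entering arc per component of the complement of the robust set. -/
lemma entering_unique (hD : Strong D) {Uf : Finset V}
    (hU : ∀ z : V, z ∈ Uf ↔ z ∈ Wrob D v₀)
    {a b a' b' : V} (hab : D.arc a b) (ha'b' : D.arc a' b')
    (haU : a ∉ Uf) (hbU : b ∈ Uf) (ha'U : a' ∉ Uf) (hb'U : b' ∈ Uf)
    (ha : a ∈ ((↑Uf : Set V)ᶜ)) (ha' : a' ∈ ((↑Uf : Set V)ᶜ))
    (hcomp : (G.induce ((↑Uf : Set V)ᶜ)).connectedComponentMk ⟨a, ha⟩ =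
      (G.induce ((↑Uf : Set V)ᶜ)).connectedComponentMk ⟨a', ha'⟩) :
    (a, b) = (a', b') := by
  have haW : a ∉ Wrob D v₀ := fun h => haU ((hU a).mpr h)
  have ha'W : a' ∉ Wrob D v₀ := fun h => ha'U ((hU a').mpr h)
  obtain ⟨f, hfarc, hfa, hfW⟩ := exists_pocket_head_robust hD haW
  -- invariant along the component
  have hreach := SimpleGraph.ConnectedComponent.exact hcomp
  rw [SimpleGraph.reachable_iff_reflTransGen] at hreach
  have hinv : (⟨a', ha'⟩ : ↥((↑Uf : Set V)ᶜ)).1 ∈ Apk D v₀ f := by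
    refine rtg_closed (S := {s : ↥((↑Uf : Set V)ᶜ) | s.1 ∈ Apk D v₀ f})
      ?_ hreach hfa
    rintro ⟨s, hs⟩ ⟨t, ht⟩ hadj hsA
    have htW : t ∉ Wrob D v₀ := fun h => ht (by simpa using (hU t).mpr h)
    obtain ⟨g, hgarc, hgt, hgW⟩ := exists_pocket_head_robust hD htW
    have hadj' : G.Adj s t := hadj
    by_cases hgf : g = f
    · exact hgf ▸ hgt
    · exact absurd (pockets_no_edge hD hfarc hgarc (fun h => hgf h.symm) hfW hgW
        hsA hgt hadj') not_false
  have ha'A : a' ∈ Apk D v₀ f := hinv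
  have hbW : b ∈ Wrob D v₀ := (hU b).mp hbU
  have hb'W : b' ∈ Wrob D v₀ := (hU b').mp hb'U
  have h1 : (a, b) = f := by
    by_contra h
    exact Wrob_disj_Apk hbW hfarc (Apk_closed hfa hab h)
  have h2 : (a', b') = f := by
    by_contra h
    exact Wrob_disj_Apk hb'W hfarc (Apk_closed ha'A ha'b' h)
  rw [h1, h2]

/-- Existence of a strong reversal shifting one indegree unit from `v₀` to a robust `u`. -/
lemma exists_unit_reversal (hD : Strong D) {u : V} (hu : u ∈ Wrob D v₀) (huv : u ≠ v₀) :
    ∃ D' : GraphOrientation G, Strong D' ∧ indeg D' u = indeg D u + 1 ∧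
      indeg D' v₀ + 1 = indeg D v₀ ∧
      ∀ z : V, z ≠ u → z ≠ v₀ → indeg D' z = indeg D z := by
  obtain ⟨p, hne, hnd, hch, hhd, hlast⟩ := rtg_exists_path (hD u v₀)
  have hsub := listArcs'_sub (R := D.arc) hch
  refine ⟨revO D (listArcs' p) hsub, ?_, ?_, ?_, ?_⟩
  · exact revO_path_strong hne hnd hch hhd hlast hsub hD (fun f hf => hu f hf)
  · exact indeg_revO_head hne hnd hch hhd hlast huv hsub
  · exact indeg_revO_last hne hnd hch hhd hlast huv hsub
  · exact fun z hzu hzv => indeg_revO_other hne hnd hch hhd hlast huv hsub hzu hzv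

end Pocket

section Counting
variable {V : Type*} [Fintype V] {G : SimpleGraph V}
attribute [local instance] Classical.propDecidable
set_option linter.unusedSectionVars false

lemma indeg_eq_card (D : GraphOrientation G) (v : V) :
    indeg D v = (Finset.univ.filter (fun y => D.arc y v)).card := by
  unfold indeg
  rw [show {u | D.arc u v} = ↑(Finset.univ.filter (fun y => D.arc y v)) by ext y; simp]
  exact Set.ncard_coe_finset _

/-- Arcs with head in `U`. -/
noncomputable def pinF (D : GraphOrientation G) (U : Finset V) : Finset (V × V) :=
  Finset.univ.filter (fun p => D.arc p.1 p.2 ∧ p.2 ∈ U)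

noncomputable def insideF (D : GraphOrientation G) (U : Finset V) : Finset (V × V) :=
  Finset.univ.filter (fun p => D.arc p.1 p.2 ∧ p.2 ∈ U ∧ p.1 ∈ U)

noncomputable def enterF (D : GraphOrientation G) (U : Finset V) : Finset (V × V) :=
  Finset.univ.filter (fun p => D.arc p.1 p.2 ∧ p.2 ∈ U ∧ p.1 ∉ U)

lemma sum_indeg_eq (D : GraphOrientation G) (U : Finset V) :
    ∑ u ∈ U, indeg D u = (pinF D U).card := by
  rw [Finset.card_eq_sum_card_fiberwise (f := Prod.snd) (t := U)
    (by intro p hp; simp only [Finset.mem_coe, pinF, Finset.mem_filter] at hp; exact hp.2.2)]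
  refine Finset.sum_congr rfl fun u hu => ?_
  rw [indeg_eq_card]
  have himg : Finset.filter (fun p => p.2 = u) (pinF D U) =
      (Finset.univ.filter (fun y => D.arc y u)).image (fun y => (y, u)) := by
    ext ⟨p1, p2⟩
    simp only [pinF, Finset.mem_filter, Finset.mem_univ, true_and, Finset.mem_image,
      Prod.mk.injEq]
    constructor
    · rintro ⟨⟨h1, h2⟩, rfl⟩
      exact ⟨p1, h1, rfl, rfl⟩
    · rintro ⟨y, hy, rfl, rfl⟩
      exact ⟨⟨hy, hu⟩, rfl⟩
  rw [himg, Finset.card_image_of_injOn (fun x _ y _ h => by injection h)]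

lemma pin_split (D : GraphOrientation G) (U : Finset V) :
    (pinF D U).card = (insideF D U).card + (enterF D U).card := by
  have h1 : insideF D U = (pinF D U).filter (fun p => p.1 ∈ U) := by
    ext p; simp only [insideF, pinF, Finset.mem_filter, Finset.mem_univ, true_and]; tauto
  have h2 : enterF D U = (pinF D U).filter (fun p => ¬ p.1 ∈ U) := by
    ext p; simp only [enterF, pinF, Finset.mem_filter, Finset.mem_univ, true_and]; tauto
  rw [h1, h2, Finset.card_filter_add_card_filter_not]

lemma edgesIn_eq_inside (D : GraphOrientation G) (U : Finset V) :
    {e : Sym2 V | e ∈ G.edgeSet ∧ ∀ x ∈ e, x ∈ U}.ncard = (insideF D U).card := by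
  have hset : {e : Sym2 V | e ∈ G.edgeSet ∧ ∀ x ∈ e, x ∈ U} =
      ↑((insideF D U).image (fun p => s(p.1, p.2))) := by
    ext e
    induction e with
    | _ x y =>
      simp only [Set.mem_setOf_eq, SimpleGraph.mem_edgeSet, Finset.coe_image,
        Set.mem_image, Finset.mem_coe]
      constructor
      · rintro ⟨hadj, hmem⟩
        have hx : x ∈ U := hmem x (by simp)
        have hy : y ∈ U := hmem y (by simp)
        rcases (D.adj_iff x y).mp hadj with h | h
        · exact ⟨(x, y), by simp [insideF, h, hx, hy], rfl⟩
        · exact ⟨(y, x), by simp [insideF, h, hx, hy], Sym2.eq_swap⟩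
      · rintro ⟨⟨p1, p2⟩, hp, hpe⟩
        simp only [insideF, Finset.mem_filter, Finset.mem_univ, true_and] at hp
        obtain ⟨h1, h2, h3⟩ := hp
        have hadj : G.Adj p1 p2 := (D.adj_iff p1 p2).mpr (Or.inl h1)
        have hpe' : s(p1, p2) = s(x, y) := hpe
        rcases Sym2.eq_iff.mp hpe' with ⟨rfl, rfl⟩ | ⟨rfl, rfl⟩
        · refine ⟨hadj, fun z hz => ?_⟩
          rcases Sym2.mem_iff.mp hz with rfl | rfl
          · exact h3
          · exact h2
        · refine ⟨hadj.symm, fun z hz => ?_⟩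
          rcases Sym2.mem_iff.mp hz with rfl | rfl
          · exact h2
          · exact h3
  rw [hset, Set.ncard_coe_finset]
  refine Finset.card_image_of_injOn ?_
  rintro ⟨p1, p2⟩ hp ⟨q1, q2⟩ hq h
  simp only [Finset.mem_coe, insideF, Finset.mem_filter, Finset.mem_univ, true_and] at hp hq
  rcases Sym2.eq_iff.mp h with ⟨rfl, rfl⟩ | ⟨rfl, rfl⟩
  · rfl
  · exact absurd hp.1 (D.asymm _ _ hq.1)

lemma rtg_lift_induce {D : GraphOrientation G} {S : Set V} {x a : V}
    (h : ReflTransGen (fun p q => D.arc p q ∧ p ∉ S ∧ q ∉ S) x a)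
    (hx : x ∈ Sᶜ) :
    ∀ (ham : a ∈ Sᶜ), (G.induce Sᶜ).Reachable ⟨x, hx⟩ ⟨a, ham⟩ := by
  induction h with
  | refl => exact fun _ => SimpleGraph.Reachable.refl _
  | tail hbc hcd ih =>
    intro ham
    have hbm : _ ∈ Sᶜ := hcd.2.1
    refine (ih hbm).trans ?_
    refine SimpleGraph.Adj.reachable ?_
    have hadj : G.Adj _ _ := (D.adj_iff _ _).mpr (Or.inl hcd.1)
    exact hadj

lemma compCount_le_enter {D : GraphOrientation G} (hD : Strong D) {U : Finset V}
    (hU : U.Nonempty) :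
    Nat.card ((G.induce ((↑U : Set V)ᶜ)).ConnectedComponent) ≤ (enterF D U).card := by
  obtain ⟨u₀, hu₀⟩ := hU
  have hex : ∀ c : (G.induce ((↑U : Set V)ᶜ)).ConnectedComponent,
      ∃ p : V × V, p ∈ enterF D U ∧ ∃ hp : p.1 ∈ ((↑U : Set V)ᶜ),
        (G.induce ((↑U : Set V)ᶜ)).connectedComponentMk ⟨p.1, hp⟩ = c := by
    intro c
    obtain ⟨⟨x, hx⟩, hxc⟩ := c.exists_rep
    have hxU : x ∉ (↑U : Set V) := hx
    obtain ⟨a, b, hab, haS, hbS, hrest⟩ :=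
      rtg_first_entry D.arc (↑U : Set V) (hD x u₀) hxU (by simpa using hu₀)
    refine ⟨(a, b), ?_, by simpa using haS, ?_⟩
    · simp only [enterF, Finset.mem_filter, Finset.mem_univ, true_and]
      exact ⟨hab, by simpa using hbS, by simpa using haS⟩
    · have := rtg_lift_induce hrest hx (by simpa using haS)
      rw [← hxc]
      exact (SimpleGraph.ConnectedComponent.sound this).symm
  set g : (G.induce ((↑U : Set V)ᶜ)).ConnectedComponent → {p // p ∈ enterF D U} :=
    fun c => ⟨(hex c).choose, (hex c).choose_spec.1⟩ with hg
  have hinj : Function.Injective g := by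
    intro c c' hcc
    obtain ⟨hp, hc⟩ := (hex c).choose_spec.2
    obtain ⟨hp', hc'⟩ := (hex c').choose_spec.2
    have hval : (hex c).choose = (hex c').choose := congrArg Subtype.val hcc
    rw [← hc, ← hc']
    congr 1
    exact Subtype.ext (congrArg Prod.fst hval)
  calc Nat.card ((G.induce ((↑U : Set V)ᶜ)).ConnectedComponent)
      ≤ Nat.card {p // p ∈ enterF D U} := Nat.card_le_card_of_injective g hinj
    _ = (enterF D U).card := Nat.card_eq_finsetCard _

lemma enter_le_compCount {D : GraphOrientation G} (hD : Strong D) {v₀ : V}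
    {Uf : Finset V} (hU : ∀ z : V, z ∈ Uf ↔ z ∈ Wrob D v₀) :
    (enterF D Uf).card ≤ Nat.card ((G.induce ((↑Uf : Set V)ᶜ)).ConnectedComponent) := by
  have hmem : ∀ p : {q // q ∈ enterF D Uf}, (p.1.1 ∈ ((↑Uf : Set V)ᶜ)) := by
    rintro ⟨p, hp⟩
    simp only [enterF, Finset.mem_filter, Finset.mem_univ, true_and] at hp
    simpa using hp.2.2
  set g : {q // q ∈ enterF D Uf} → (G.induce ((↑Uf : Set V)ᶜ)).ConnectedComponent :=
    fun p => (G.induce ((↑Uf : Set V)ᶜ)).connectedComponentMk ⟨p.1.1, hmem p⟩ with hg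
  have hinj : Function.Injective g := by
    rintro ⟨⟨a, b⟩, hp⟩ ⟨⟨a', b'⟩, hp'⟩ hcc
    simp only [enterF, Finset.mem_filter, Finset.mem_univ, true_and] at hp hp'
    have := entering_unique hD hU hp.1 hp'.1 hp.2.2 hp.2.1 hp'.2.2 hp'.2.1
      (by simpa using hp.2.2) (by simpa using hp'.2.2) hcc
    exact Subtype.ext this
  calc (enterF D Uf).card = Nat.card {q // q ∈ enterF D Uf} :=
        (Nat.card_eq_finsetCard _).symm
    _ ≤ _ := Nat.card_le_card_of_injective g hinj

end Counting

section Phi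
variable {V : Type*} [Fintype V] {G : SimpleGraph V}
attribute [local instance] Classical.propDecidable
set_option linter.unusedSectionVars false

noncomputable def Phi (D : GraphOrientation G) : ℕ :=
  ∑ v ∈ Finset.univ, (Fintype.card V + 1) ^ (indeg D v)

lemma exists_phi_min (hex : ∃ D : GraphOrientation G, Strong D) :
    ∃ D : GraphOrientation G, Strong D ∧ ∀ D' : GraphOrientation G, Strong D' → Phi D ≤ Phi D' := by
  classical
  obtain ⟨D₀, hD₀⟩ := hex
  have hset : ∃ n, ∃ D : GraphOrientation G, Strong D ∧ Phi D = n := ⟨Phi D₀, D₀, hD₀, rfl⟩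
  obtain ⟨D, hD, hPhi⟩ := Nat.find_spec hset
  refine ⟨D, hD, fun D' hD' => ?_⟩
  rw [hPhi]
  exact Nat.find_min' hset ⟨D', hD', rfl⟩

lemma robust_indeg {D : GraphOrientation G} (hD : Strong D)
    (hmin : ∀ D' : GraphOrientation G, Strong D' → Phi D ≤ Phi D') {v₀ u : V} (hu : u ∈ Wrob D v₀) :
    indeg D v₀ ≤ indeg D u + 1 := by
  by_cases huv : u = v₀
  · subst huv; omega
  by_contra hcon
  push_neg at hcon
  obtain ⟨D', hD', h1, h2, h3⟩ := exists_unit_reversal hD hu huv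
  set B := Fintype.card V + 1 with hBdef
  have hB : 2 ≤ B := by
    have : 0 < Fintype.card V := Fintype.card_pos_iff.mpr ⟨u⟩
    omega
  have hv₀mem : v₀ ∈ Finset.univ.erase u :=
    Finset.mem_erase.mpr ⟨fun h => huv h.symm, Finset.mem_univ _⟩
  have key : ∀ E : GraphOrientation G,
      Phi E = ∑ v ∈ (Finset.univ.erase u).erase v₀, B ^ indeg E v
        + B ^ indeg E v₀ + B ^ indeg E u := by
    intro E
    have e1 : ∑ v ∈ Finset.univ.erase u, B ^ indeg E v + B ^ indeg E u =
        ∑ v ∈ Finset.univ, B ^ indeg E v :=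
      Finset.sum_erase_add Finset.univ _ (Finset.mem_univ u)
    have e2 : ∑ v ∈ (Finset.univ.erase u).erase v₀, B ^ indeg E v + B ^ indeg E v₀ =
        ∑ v ∈ Finset.univ.erase u, B ^ indeg E v :=
      Finset.sum_erase_add (Finset.univ.erase u) _ hv₀mem
    have ePhi : Phi E = ∑ v ∈ Finset.univ, B ^ indeg E v := rfl
    omega
  have hrest : ∑ v ∈ (Finset.univ.erase u).erase v₀, B ^ indeg D' v =
      ∑ v ∈ (Finset.univ.erase u).erase v₀, B ^ indeg D v := by
    refine Finset.sum_congr rfl fun z hz => ?_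
    rw [Finset.mem_erase, Finset.mem_erase] at hz
    rw [h3 z hz.2.1 hz.1]
  have hlt : B ^ indeg D' v₀ + B ^ indeg D' u < B ^ indeg D v₀ + B ^ indeg D u := by
    have hle : indeg D' u ≤ indeg D' v₀ := by omega
    have c1 : B ^ indeg D' u ≤ B ^ indeg D' v₀ := Nat.pow_le_pow_right (by omega) hle
    have c2 : B ^ indeg D' v₀ + B ^ indeg D' v₀ ≤ B ^ (indeg D' v₀ + 1) := by
      rw [pow_succ]
      have h0 : 0 < B ^ indeg D' v₀ := Nat.pow_pos (by omega)
      nlinarith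
    have c3 : B ^ (indeg D' v₀ + 1) = B ^ indeg D v₀ := by rw [h2]
    have c4 : 0 < B ^ indeg D u := Nat.pow_pos (by omega)
    omega
  have hfin : Phi D' < Phi D := by
    have k1 := key D'
    have k2 := key D
    omega
  exact absurd (hmin D' hD') (by omega)

lemma phi_min_sup_le {D : GraphOrientation G} (hD : Strong D)
    (hmin : ∀ D' : GraphOrientation G, Strong D' → Phi D ≤ Phi D') :
    ∀ D' : GraphOrientation G, Strong D' → Finset.univ.sup (indeg D) ≤ Finset.univ.sup (indeg D') := by
  intro D' hD'
  rcases isEmpty_or_nonempty V with hV | hV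
  · rw [Finset.univ_eq_empty]
    simp
  · set B := Fintype.card V + 1 with hBdef
    have hB : 2 ≤ B := by
      have : 0 < Fintype.card V := Fintype.card_pos
      omega
    obtain ⟨v, _, hv⟩ := Finset.exists_mem_eq_sup Finset.univ Finset.univ_nonempty (indeg D)
    have h1 : B ^ (Finset.univ.sup (indeg D)) ≤ Phi D := by
      have ePhi : Phi D = ∑ z ∈ Finset.univ, B ^ indeg D z := rfl
      rw [hv, ePhi]
      exact Finset.single_le_sum (f := fun z => B ^ indeg D z)
        (fun i _ => Nat.zero_le _) (Finset.mem_univ v)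
    have h2 : Phi D' < B ^ (Finset.univ.sup (indeg D') + 1) := by
      have hterm : ∀ z ∈ Finset.univ, B ^ indeg D' z ≤ B ^ (Finset.univ.sup (indeg D')) :=
        fun z hz => Nat.pow_le_pow_right (by omega) (Finset.le_sup hz)
      have ePhi : Phi D' = ∑ z ∈ Finset.univ, B ^ indeg D' z := rfl
      have hsum : Phi D' ≤ Fintype.card V * B ^ (Finset.univ.sup (indeg D')) := by
        rw [ePhi]
        calc ∑ z ∈ Finset.univ, B ^ indeg D' z ≤ ∑ _z ∈ Finset.univ, B ^ (Finset.univ.sup (indeg D')) :=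
              Finset.sum_le_sum hterm
          _ = Fintype.card V * B ^ (Finset.univ.sup (indeg D')) := by
              rw [Finset.sum_const, smul_eq_mul, Finset.card_univ]
      have hlt : Fintype.card V * B ^ (Finset.univ.sup (indeg D')) <
          B ^ (Finset.univ.sup (indeg D') + 1) := by
        rw [pow_succ, mul_comm (B ^ _) B]
        have h0 : 0 < B ^ (Finset.univ.sup (indeg D')) := Nat.pow_pos (by omega)
        have : Fintype.card V < B := by omega
        exact Nat.mul_lt_mul_of_lt_of_le this (le_refl _) h0
      omega
    have h3 : B ^ (Finset.univ.sup (indeg D)) < B ^ (Finset.univ.sup (indeg D') + 1) := by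
      have := hmin D' hD'
      omega
    have := (Nat.pow_lt_pow_iff_right (by omega : 1 < B)).mp h3
    omega

lemma lower_bound_U {D' : GraphOrientation G} (hD' : Strong D') (U : Finset V)
    (hU : U.Nonempty) :
    {e : Sym2 V | e ∈ G.edgeSet ∧ ∀ x ∈ e, x ∈ U}.ncard +
      Nat.card ((G.induce ((↑U : Set V)ᶜ)).ConnectedComponent) ≤
      U.card * Finset.univ.sup (indeg D') := by
  rw [edgesIn_eq_inside D' U]
  have h1 := compCount_le_enter hD' hU
  have h2 := pin_split D' U
  have h3 := sum_indeg_eq D' U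
  have h4 : ∑ u ∈ U, indeg D' u ≤ U.card * Finset.univ.sup (indeg D') := by
    calc ∑ u ∈ U, indeg D' u ≤ ∑ _u ∈ U, Finset.univ.sup (indeg D') :=
          Finset.sum_le_sum (fun u _ => Finset.le_sup (Finset.mem_univ u))
      _ = U.card * Finset.univ.sup (indeg D') := by rw [Finset.sum_const, smul_eq_mul]
  omega

lemma upper_bound_W {D : GraphOrientation G} (hD : Strong D)
    (hmin : ∀ D' : GraphOrientation G, Strong D' → Phi D ≤ Phi D') (hV : Nonempty V) :
    ∃ Uf : Finset V, Uf.Nonempty ∧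
      Finset.univ.sup (indeg D) * Uf.card + 1 ≤
        {e : Sym2 V | e ∈ G.edgeSet ∧ ∀ x ∈ e, x ∈ Uf}.ncard +
        Nat.card ((G.induce ((↑Uf : Set V)ᶜ)).ConnectedComponent) + Uf.card := by
  classical
  obtain ⟨v₀, _, hv₀⟩ := Finset.exists_mem_eq_sup Finset.univ Finset.univ_nonempty (indeg D)
  set k := Finset.univ.sup (indeg D) with hk
  set Uf := Finset.univ.filter (· ∈ Wrob D v₀) with hUf
  have hUmem : ∀ z : V, z ∈ Uf ↔ z ∈ Wrob D v₀ := by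
    intro z; simp [hUf]
  have hv₀Uf : v₀ ∈ Uf := (hUmem v₀).mpr v0_mem_Wrob
  have hUne : Uf.Nonempty := ⟨v₀, hv₀Uf⟩
  refine ⟨Uf, hUne, ?_⟩
  have hcl1 : ∀ u ∈ Uf, k ≤ indeg D u + 1 := by
    intro u hu
    have := robust_indeg hD hmin ((hUmem u).mp hu)
    omega
  -- sum bound
  have hsum1 : ∑ u ∈ Uf.erase v₀, (indeg D u + 1) + (indeg D v₀ + 1) =
      ∑ u ∈ Uf, (indeg D u + 1) :=
    Finset.sum_erase_add Uf _ hv₀Uf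
  have hsum2 : (Uf.erase v₀).card * k ≤ ∑ u ∈ Uf.erase v₀, (indeg D u + 1) := by
    have := Finset.card_nsmul_le_sum (Uf.erase v₀) (fun u => indeg D u + 1) k
      (fun u hu => hcl1 u (Finset.mem_of_mem_erase hu))
    simpa using this
  have hcarderase : (Uf.erase v₀).card + 1 = Uf.card := by
    rw [Finset.card_erase_of_mem hv₀Uf]
    have : 1 ≤ Uf.card := Finset.card_pos.mpr hUne
    omega
  have hsum3 : k * Uf.card + 1 ≤ ∑ u ∈ Uf, (indeg D u + 1) := by
    have e1 : k * Uf.card = (Uf.erase v₀).card * k + k := by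
      rw [mul_comm]
      calc Uf.card * k = ((Uf.erase v₀).card + 1) * k := by rw [hcarderase]
        _ = (Uf.erase v₀).card * k + k := by ring
    have e2 : indeg D v₀ + 1 = k + 1 := by omega
    omega
  have hsum4 : ∑ u ∈ Uf, (indeg D u + 1) = ∑ u ∈ Uf, indeg D u + Uf.card := by
    rw [Finset.sum_add_distrib, Finset.sum_const, smul_eq_mul, mul_one]
  have h2 := pin_split D Uf
  have h3 := sum_indeg_eq D Uf
  have h4 := enter_le_compCount hD hUmem
  have h5 := edgesIn_eq_inside D Uf
  omega

end Phi


/-- The list of consecutive arcs of a path given as a list of vertices. -/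
def pathArcs {V : Type*} (p : List V) : List (V × V) := p.zip p.tail

/-- The list of arcs of a cycle given as a list of (distinct) vertices,
including the closing arc from the last vertex back to the first. -/
def cycleArcs {V : Type*} (p : List V) : List (V × V) := p.zip (p.rotate 1)

/-- `p` is a (simple) directed path from `u` to `v` with respect to the arc relation `A`. -/
def IsDipath {V : Type*} (A : V → V → Prop) (p : List V) (u v : V) : Prop :=
  p.head? = some u ∧ p.getLast? = some v ∧ p.Nodup ∧ p.Chain' A

/-- `D'` is obtained from `D` by reversing exactly the arcs in the list `A`
(all of which must be arcs of `D`). -/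
def ReversalAlong {V : Type*} {G : SimpleGraph V} (D D' : GraphOrientation G)
    (A : List (V × V)) : Prop :=
  (∀ a ∈ A, D.arc a.1 a.2) ∧ ∀ u v, D'.arc u v ↔ ((D.arc u v ∧ (u, v) ∉ A) ∨ (v, u) ∈ A)

/-- `D'` is obtained from `D` by reversing every arc of some directed cycle. -/
def CycleReversal {V : Type*} {G : SimpleGraph V} (D D' : GraphOrientation G) : Prop :=
  ∃ p : List V, p ≠ [] ∧ p.Nodup ∧ ReversalAlong D D' (cycleArcs p)

/-- `D'` is obtained from `D` by a weak reversal: reversing a directed path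
from `u` to `v` where `δ(u) = δ(v) - 1`. -/
def WeakReversal {V : Type*} {G : SimpleGraph V} (D D' : GraphOrientation G) : Prop :=
  ∃ (p : List V) (u v : V), IsDipath D.arc p u v ∧ indeg D u + 1 = indeg D v ∧
    ReversalAlong D D' (pathArcs p)

/-- `D` contains no reversible path, i.e. no directed path from `u` to `v`
with `δ(u) < δ(v) - 1`. -/
def NoReversiblePath {V : Type*} {G : SimpleGraph V} (D : GraphOrientation G) : Prop :=
  ∀ u v : V, Relation.ReflTransGen D.arc u v → indeg D v ≤ indeg D u + 1

/-- The indegree sequence of an orientation, sorted in decreasing order. -/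
noncomputable def degSeq {V : Type*} [Fintype V] {G : SimpleGraph V}
    (D : GraphOrientation G) : List ℕ :=
  ((Finset.univ.val.map (indeg D)).sort (· ≤ ·)).reverse

/-- Lexicographic (non-strict) comparison of lists of naturals. -/
def lexLE (l₁ l₂ : List ℕ) : Prop := l₁ = l₂ ∨ List.Lex (· < ·) l₁ l₂

/-- `u` two-reaches `v`: there are two arc-disjoint directed paths from `u` to `v`. -/
def TwoReaches {V : Type*} (A : V → V → Prop) (u v : V) : Prop :=
  ∃ p q : List V, IsDipath A p u v ∧ IsDipath A q u v ∧ ∀ a ∈ pathArcs p, a ∉ pathArcs q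

/-- Reachability inside the induced subgraph `G[U]`. -/
def ReachIn {V : Type*} (G : SimpleGraph V) (U : Set V) (x y : V) : Prop :=
  Relation.ReflTransGen (fun a b => a ∈ U ∧ b ∈ U ∧ G.Adj a b) x y

/-- `C` is a connected component of the induced undirected subgraph `G[U]`. -/
def IsCompOf {V : Type*} (G : SimpleGraph V) (U C : Set V) : Prop :=
  ∃ x ∈ U, C = {y | ReachIn G U x y}

/-- `m(U)`: the number of edges of `G` with both endpoints in `U`. -/
noncomputable def edgesIn {V : Type*} (G : SimpleGraph V) (U : Finset V) : ℕ :=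
  {e : Sym2 V | e ∈ G.edgeSet ∧ ∀ x ∈ e, x ∈ U}.ncard

/-- `c(U)`: the number of connected components of the induced subgraph `G[V ∖ U]`. -/
noncomputable def compCount {V : Type*} (G : SimpleGraph V) (U : Finset V) : ℕ :=
  Nat.card ((G.induce ((↑U : Set V)ᶜ)).ConnectedComponent)

/-- If `G` admits a strongly connected orientation, then it admits one whose maximum
indegree equals `max_{∅ ≠ U ⊆ V} ⌈(m(U) + c(U)) / |U|⌉`, and this orientation attains
the minimum of the maximum indegree over all strongly connected orientations. -/
theorem stmt_13 {V : Type*} [Fintype V] (G : SimpleGraph V)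
    (hex : ∃ D : GraphOrientation G, ∀ u v : V, Relation.ReflTransGen D.arc u v) :
    ∃ D : GraphOrientation G, (∀ u v : V, Relation.ReflTransGen D.arc u v) ∧
      Finset.univ.sup (indeg D) =
        (⨆ U : {U : Finset V // U.Nonempty},
          ⌈((edgesIn G U.1 + compCount G U.1 : ℚ)) / (U.1.card : ℚ)⌉₊) ∧
      ∀ D' : GraphOrientation G, (∀ u v : V, Relation.ReflTransGen D'.arc u v) →
        Finset.univ.sup (indeg D) ≤ Finset.univ.sup (indeg D') := by
  classical
  obtain ⟨D, hD, hmin⟩ := exists_phi_min hex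
  refine ⟨D, hD, ?_, fun D' hD' => phi_min_sup_le hD hmin D' hD'⟩
  rcases isEmpty_or_nonempty V with hV | hV
  · haveI : IsEmpty {U : Finset V // U.Nonempty} := ⟨fun U => hV.elim U.2.choose⟩
    rw [ciSup_of_empty, Finset.univ_eq_empty, Finset.sup_empty]
  · apply le_antisymm
    · rcases Nat.eq_zero_or_pos (Finset.univ.sup (indeg D)) with h0 | hpos
      · rw [h0]; exact Nat.zero_le _
      · obtain ⟨Uf, hUne, hineq⟩ := upper_bound_W hD hmin hV
        have hcard : 0 < Uf.card := Finset.card_pos.mpr hUne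
        have hX : Finset.univ.sup (indeg D) * Uf.card + 1 ≤
            edgesIn G Uf + compCount G Uf + Uf.card := hineq
        have hmc : (Finset.univ.sup (indeg D) - 1) * Uf.card + 1 ≤
            edgesIn G Uf + compCount G Uf := by
          have hdist : (Finset.univ.sup (indeg D) - 1) * Uf.card + Uf.card =
              Finset.univ.sup (indeg D) * Uf.card := by
            have h1 : Finset.univ.sup (indeg D) - 1 + 1 = Finset.univ.sup (indeg D) := by
              omega
            calc (Finset.univ.sup (indeg D) - 1) * Uf.card + Uf.card
                = ((Finset.univ.sup (indeg D) - 1) + 1) * Uf.card := by ring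
              _ = Finset.univ.sup (indeg D) * Uf.card := by rw [h1]
          omega
        have hlt : ((Finset.univ.sup (indeg D) - 1 : ℕ) : ℚ) <
            ((edgesIn G Uf + compCount G Uf : ℚ)) / (Uf.card : ℚ) := by
          rw [lt_div_iff₀ (by exact_mod_cast hcard)]
          have hnat : (Finset.univ.sup (indeg D) - 1) * Uf.card <
              edgesIn G Uf + compCount G Uf := by omega
          exact_mod_cast hnat
        have hceil : Finset.univ.sup (indeg D) ≤
            ⌈((edgesIn G Uf + compCount G Uf : ℚ)) / (Uf.card : ℚ)⌉₊ := by
          have h2 := Nat.lt_ceil.mpr hlt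
          omega
        refine le_ciSup_of_le ?_ ⟨Uf, hUne⟩ hceil
        exact Set.Finite.bddAbove (Set.finite_range _)
    · haveI : Nonempty {U : Finset V // U.Nonempty} :=
        ⟨⟨Finset.univ, Finset.univ_nonempty⟩⟩
      refine ciSup_le fun U => ?_
      obtain ⟨Uf, hUne⟩ := U
      have hcard : 0 < Uf.card := Finset.card_pos.mpr hUne
      have hb : edgesIn G Uf + compCount G Uf ≤
          Uf.card * Finset.univ.sup (indeg D) := lower_bound_U hD Uf hUne
      rw [Nat.ceil_le, div_le_iff₀ (by exact_mod_cast hcard)]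
      have : (edgesIn G Uf + compCount G Uf : ℕ) ≤
          Finset.univ.sup (indeg D) * Uf.card := by
        calc edgesIn G Uf + compCount G Uf ≤ Uf.card * Finset.univ.sup (indeg D) := hb
          _ = Finset.univ.sup (indeg D) * Uf.card := mul_comm _ _
      exact_mod_cast this
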